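/- Cohomological equation solvability: with T as above and non-resonance up to order r, for every N ≤ r−1 and every homogeneous polynomial R of degree N, setting K = Σ_{α=γ} r_{ααℓ} z^α\bar z^α (the 'resonant part' of R) and τ = Σ_{α≠γ} (r_{αγℓ}/⟨α−γ,β⟩) z^α \bar z^γ, one has R − K = T(τ) and [K, |z_j|²]_{Poisson} = 0 for every j. -/

import Mathlib

private lemma hasFDerivAt_pow_aux {E : Type*} [NormedAddCommGroup E] [NormedSpace ℝ E]
    {f : E → ℂ} {f' : E →L[ℝ] ℂ} {x : E} (hf : HasFDerivAt f f' x) :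
    ∀ a : ℕ, HasFDerivAt (fun y => f y ^ a) (((a : ℂ) * f x ^ (a - 1)) • f') x := by
  intro a
  induction a with
  | zero =>
      have h := hasFDerivAt_const (𝕜 := ℝ) (E := E) (1 : ℂ) x
      convert h using 1 <;> simp
      ext v; simp
  | succ a ih =>
      have h1 := ih.mul hf
      have heq : (((a + 1 : ℕ) : ℂ) * f x ^ (a + 1 - 1)) • f'
          = f x ^ a • f' + f x • (((a : ℂ) * f x ^ (a - 1)) • f') := by
        ext v
        simp only [ContinuousLinearMap.smul_apply, ContinuousLinearMap.add_apply, smul_eq_mul]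
        cases a with
        | zero => simp
        | succ b =>
            have : f x * f x ^ (b + 1 - 1) = f x ^ (b + 1) := by
              rw [Nat.add_sub_cancel, ← pow_succ']
            push_cast
            simp only [Nat.add_sub_cancel] at this ⊢
            rw [show f x * ((((b : ℂ) + 1)) * f x ^ b * f' v)
                = ((b : ℂ) + 1) * (f x * f x ^ b) * f' v by ring, ← pow_succ']
            ring
      rw [heq]
      exact h1.congr_of_eventuallyEq (Filter.Eventually.of_forall fun y => by simp [pow_succ])
  
/-- Cohomological equation: with `K` the resonant part of `R` and
`τ = Σ_{α≠γ} r_{αγ}/⟨α-γ,β⟩ z^α z̄^γ`, one has `R - K = T τ`, and the function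
associated to `K` Poisson-commutes with every `|z_j|² = x_j² + ξ_j²`. -/
theorem stmt11 {n : ℕ} (r : ℕ) (hr : 3 ≤ r) (β : Fin n → ℝ)
    (hβ : ∀ j, 0 < β j)
    (hres : ∀ α : Fin n → ℤ, α ≠ 0 → (∑ j, (α j).natAbs) < r →
      (∑ j, (α j : ℝ) * β j) ≠ 0)
    (N : ℕ) (hN : N ≤ r - 1)
    (R K τ : ((Fin n → ℕ) × (Fin n → ℕ)) →₀ ℂ)
    (hR : ∀ p ∈ R.support, ((∑ j, p.1 j) + ∑ j, p.2 j) = N)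
    (hK : ∀ p, K p = if p.1 = p.2 then R p else 0)
    (hτ : ∀ p, τ p = if p.1 = p.2 then 0
      else R p / ((∑ j, ((p.1 j : ℝ) - (p.2 j : ℝ)) * β j : ℝ) : ℂ))
    (fK : ((Fin n → ℝ) × (Fin n → ℝ)) → ℂ)
    (hfK : ∀ q, fK q = K.sum (fun p c =>
      c * (∏ k, ((q.1 k : ℂ) + Complex.I * (q.2 k : ℂ)) ^ (p.1 k))
        * ∏ k, ((starRingEnd ℂ) ((q.1 k : ℂ) + Complex.I * (q.2 k : ℂ))) ^ (p.2 k))) :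
    (∀ p, R p - K p
        = ((∑ j, ((p.1 j : ℝ) - (p.2 j : ℝ)) * β j : ℝ) : ℂ) * τ p) ∧
    ∀ j : Fin n, ∀ fI : ((Fin n → ℝ) × (Fin n → ℝ)) → ℂ,
      (∀ q, fI q = ((q.1 j : ℂ)) ^ 2 + ((q.2 j : ℂ)) ^ 2) →
      ∀ q, ∑ k, (fderiv ℝ fK q ((0 : Fin n → ℝ), Pi.single k 1)
              * fderiv ℝ fI q (Pi.single k 1, (0 : Fin n → ℝ))
          - fderiv ℝ fK q (Pi.single k 1, (0 : Fin n → ℝ))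
              * fderiv ℝ fI q ((0 : Fin n → ℝ), Pi.single k 1)) = 0 := by
  constructor
  · -- algebraic part
    intro p
    by_cases hpe : p.1 = p.2
    · have hc : (∑ j, ((p.1 j : ℝ) - (p.2 j : ℝ)) * β j) = 0 := by
        apply Finset.sum_eq_zero
        intro j _
        rw [hpe]; ring
      rw [hK p, hτ p, if_pos hpe, if_pos hpe, hc]
      simp
    · rw [hK p, hτ p, if_neg hpe, if_neg hpe]
      by_cases hRp : R p = 0
      · simp [hRp]
      · have hmem : p ∈ R.support := Finsupp.mem_support_iff.mpr hRp
        have hdeg := hR p hmem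
        set c : ℝ := ∑ j, ((p.1 j : ℝ) - (p.2 j : ℝ)) * β j with hc
        have hcne : c ≠ 0 := by
          have := hres (fun j => (p.1 j : ℤ) - (p.2 j : ℤ)) ?_ ?_
          · convert this using 1
            apply Finset.sum_congr rfl
            intro j _
            push_cast
            ring
          · intro h0
            apply hpe
            funext j
            have := congrFun h0 j
            simp only [Pi.zero_apply, sub_eq_zero] at this
            exact_mod_cast this
          · calc (∑ j, ((p.1 j : ℤ) - (p.2 j : ℤ)).natAbs)
                ≤ ∑ j, (p.1 j + p.2 j) := by
                  apply Finset.sum_le_sum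
                  intro j _
                  have : ((p.1 j : ℤ) - (p.2 j : ℤ)).natAbs ≤ (p.1 j : ℤ).natAbs + (p.2 j : ℤ).natAbs := by
                    exact Int.natAbs_sub_le _ _
                  simpa using this
              _ = N := by rw [Finset.sum_add_distrib]; exact hdeg
              _ ≤ r - 1 := hN
              _ < r := by omega
        have hcC : (c : ℂ) ≠ 0 := by exact_mod_cast hcne
        field_simp
        simp
  · -- Poisson bracket part
    intro j fI hfI q
    classical
    -- coordinate functions
    let X : Fin n → (((Fin n → ℝ) × (Fin n → ℝ)) →L[ℝ] ℝ) := fun k =>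
      (ContinuousLinearMap.proj k).comp (ContinuousLinearMap.fst ℝ (Fin n → ℝ) (Fin n → ℝ))
    let Y : Fin n → (((Fin n → ℝ) × (Fin n → ℝ)) →L[ℝ] ℝ) := fun k =>
      (ContinuousLinearMap.proj k).comp (ContinuousLinearMap.snd ℝ (Fin n → ℝ) (Fin n → ℝ))
    let u : Fin n → ((Fin n → ℝ) × (Fin n → ℝ)) → ℂ := fun k w => ((w.1 k : ℂ)) ^ 2 + ((w.2 k : ℂ)) ^ 2
    let U : Fin n → (((Fin n → ℝ) × (Fin n → ℝ)) →L[ℝ] ℂ) := fun k =>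
      ((2 : ℂ) * (q.1 k : ℂ)) • (Complex.ofRealCLM.comp (X k))
        + ((2 : ℂ) * (q.2 k : ℂ)) • (Complex.ofRealCLM.comp (Y k))
    have hXapp : ∀ k (v : ((Fin n → ℝ) × (Fin n → ℝ))), X k v = v.1 k := fun k v => rfl
    have hYapp : ∀ k (v : ((Fin n → ℝ) × (Fin n → ℝ))), Y k v = v.2 k := fun k v => rfl
    have hU : ∀ k, HasFDerivAt (u k) (U k) q := by
      intro k
      have hx : HasFDerivAt (fun w : ((Fin n → ℝ) × (Fin n → ℝ)) => ((w.1 k : ℂ)))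
          (Complex.ofRealCLM.comp (X k)) q :=
        (Complex.ofRealCLM.comp (X k)).hasFDerivAt
      have hy : HasFDerivAt (fun w : ((Fin n → ℝ) × (Fin n → ℝ)) => ((w.2 k : ℂ)))
          (Complex.ofRealCLM.comp (Y k)) q :=
        (Complex.ofRealCLM.comp (Y k)).hasFDerivAt
      have hx2 := hasFDerivAt_pow_aux hx 2
      have hy2 := hasFDerivAt_pow_aux hy 2
      have := hx2.add hy2
      refine this.congr_fderiv ?_
      simp [U, pow_one]
    -- rewrite fK as a sum of products of (u k)^(p.1 k)
    have hfK2 : fK = fun w => ∑ p ∈ K.support, K p * ∏ m, (u m w) ^ (p.1 m) := by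
      funext w
      rw [hfK w, Finsupp.sum]
      apply Finset.sum_congr rfl
      intro p hp
      have hKp : K p ≠ 0 := Finsupp.mem_support_iff.mp hp
      have hpe : p.1 = p.2 := by
        by_contra h
        rw [hK p, if_neg h] at hKp
        exact hKp rfl
      rw [mul_assoc, ← hpe, ← Finset.prod_mul_distrib]
      congr 1
      apply Finset.prod_congr rfl
      intro m _
      rw [← mul_pow]
      congr 1
      have : (starRingEnd ℂ) ((w.1 m : ℂ) + Complex.I * (w.2 m : ℂ))
          = (w.1 m : ℂ) - Complex.I * (w.2 m : ℂ) := by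
        simp [map_add, map_mul, Complex.conj_ofReal, Complex.conj_I]
        ring
      rw [this]
      have hI := Complex.I_sq
      ring_nf
      rw [Complex.I_sq]
      ring
    -- derivative of fK
    let L : ((Fin n → ℝ) × (Fin n → ℝ)) →L[ℝ] ℂ := ∑ p ∈ K.support, K p •
      ∑ m, (∏ l ∈ Finset.univ.erase m, (u l q) ^ (p.1 l)) •
        (((p.1 m : ℂ) * (u m q) ^ (p.1 m - 1)) • U m)
    have hLK : HasFDerivAt fK L q := by
      rw [hfK2]
      apply HasFDerivAt.fun_sum
      intro p _
      exact ((HasFDerivAt.finset_prod (fun m _ => hasFDerivAt_pow_aux (hU m) (p.1 m))).const_mul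
        (K p))
    have hfKderiv : fderiv ℝ fK q = L := hLK.fderiv
    -- derivative of fI
    have hfI2 : fI = u j := by funext w; rw [hfI w]
    have hfIderiv : fderiv ℝ fI q = U j := by rw [hfI2]; exact (hU j).fderiv
    -- evaluations
    have hUapp1 : ∀ m k, (U m) (Pi.single k 1, (0 : Fin n → ℝ))
        = if m = k then 2 * (q.1 m : ℂ) else 0 := by
      intro m k
      simp only [U, ContinuousLinearMap.add_apply, ContinuousLinearMap.smul_apply,
        ContinuousLinearMap.comp_apply, hXapp, hYapp, Pi.single_apply]
      by_cases h : m = k <;> simp [h]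
    have hUapp2 : ∀ m k, (U m) ((0 : Fin n → ℝ), Pi.single k 1)
        = if m = k then 2 * (q.2 m : ℂ) else 0 := by
      intro m k
      simp only [U, ContinuousLinearMap.add_apply, ContinuousLinearMap.smul_apply,
        ContinuousLinearMap.comp_apply, hXapp, hYapp, Pi.single_apply]
      by_cases h : m = k <;> simp [h]
    have hLapp : ∀ v, L v = ∑ p ∈ K.support, K p *
        ∑ m, (∏ l ∈ Finset.univ.erase m, (u l q) ^ (p.1 l)) *
          (((p.1 m : ℂ) * (u m q) ^ (p.1 m - 1)) * (U m v)) := by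
      intro v
      simp [L, ContinuousLinearMap.sum_apply, ContinuousLinearMap.smul_apply,
        smul_eq_mul, mul_assoc]
    have key : ∀ k, ∃ G : ℂ, L (Pi.single k 1, (0 : Fin n → ℝ)) = G * (q.1 k : ℂ)
        ∧ L ((0 : Fin n → ℝ), Pi.single k 1) = G * (q.2 k : ℂ) := by
      intro k
      refine ⟨∑ p ∈ K.support, K p * ((∏ l ∈ Finset.univ.erase k, (u l q) ^ (p.1 l)) *
        (((p.1 k : ℂ) * (u k q) ^ (p.1 k - 1)) * 2)), ?_, ?_⟩
      · rw [hLapp, Finset.sum_mul]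
        apply Finset.sum_congr rfl
        intro p _
        rw [Finset.sum_eq_single k]
        · rw [hUapp1 k k, if_pos rfl]; ring
        · intro m _ hm; rw [hUapp1 m k, if_neg hm]; ring
        · intro h; exact absurd (Finset.mem_univ k) h
      · rw [hLapp, Finset.sum_mul]
        apply Finset.sum_congr rfl
        intro p _
        rw [Finset.sum_eq_single k]
        · rw [hUapp2 k k, if_pos rfl]; ring
        · intro m _ hm; rw [hUapp2 m k, if_neg hm]; ring
        · intro h; exact absurd (Finset.mem_univ k) h
    rw [hfKderiv, hfIderiv]
    apply Finset.sum_eq_zero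
    intro k _
    by_cases hk : k = j
    · subst hk
      obtain ⟨G, hG1, hG2⟩ := key k
      rw [hG1, hG2, hUapp1 k k, hUapp2 k k, if_pos rfl, if_pos rfl]
      ring
    · have h1 : (U j) (Pi.single k 1, (0 : Fin n → ℝ)) = 0 := by
        rw [hUapp1 j k, if_neg (fun h => hk h.symm)]
      have h2 : (U j) ((0 : Fin n → ℝ), Pi.single k 1) = 0 := by
        rw [hUapp2 j k, if_neg (fun h => hk h.symm)]
      rw [h1, h2]
      ring
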